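/- In the m-player game, for every 1 ≤ i ≤ m and every n ≥ 0, q_n · P(A_i) = Σ_{j=1}^{m} Σ_{k=1}^{min(l_i,l_j)} [A_{i(k)} = A_j^{(k)}] · P(A_i^{(l_i−k)}) · p_{n+k}^{A_j}. -/
import Mathlib


open MeasureTheory ENNReal

noncomputable section

/-- Probability of a single toss outcome: `true` (heads) has probability `p`,
`false` (tails) has probability `1 - p`. -/
def letterP (p : ℝ) (b : Bool) : ℝ := if b then p else 1 - p

/-- Probability of a finite string of tosses (`1` for the empty string). -/
def strP (p : ℝ) (A : List Bool) : ℝ := (A.map (letterP p)).prod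

/-- `μ` is the product measure on `{H,T}^ℕ` of i.i.d. coin tosses with heads
probability `p`: every cylinder set has the product probability. -/
def IsCoinMeasure (p : ℝ) (μ : Measure (ℕ → Bool)) : Prop :=
  ∀ (n : ℕ) (a : Fin n → Bool),
    μ {ξ | ∀ i : Fin n, ξ i = a i} = ENNReal.ofReal (∏ i, letterP p (a i))

/-- The pattern `A` (of length `l`) occurs ending exactly at toss `n`
(toss number `k ≥ 1` of `ξ` is `ξ (k - 1)`): `n ≥ l` and tosses
`n - l + 1, …, n` spell `A`. -/
def occursAt (A : List Bool) (ξ : ℕ → Bool) (n : ℕ) : Prop :=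
  A.length ≤ n ∧ (List.ofFn fun k : Fin A.length => ξ (n - A.length + k)) = A

/-- The first toss at which the pattern `A` has occurred (`⊤` if it never occurs). -/
def hitTime (A : List Bool) (ξ : ℕ → Bool) : ℕ∞ :=
  ⨅ (n : ℕ) (_ : occursAt A ξ n), (n : ℕ∞)

/-- The number of tosses until the `m`-player game ends: the minimum of the
hitting times of the patterns `A i`. -/
def gameTime {m : ℕ} (A : Fin m → List Bool) (ξ : ℕ → Bool) : ℕ∞ :=
  ⨅ i, hitTime (A i) ξ

namespace MultiRenewal

/-! ### Elementary facts about `letterP` and `strP` -/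

lemma letterP_nonneg {p : ℝ} (hp0 : 0 ≤ p) (hp1 : p ≤ 1) (b : Bool) : 0 ≤ letterP p b := by
  cases b <;> simp [letterP] <;> linarith

lemma strP_nonneg {p : ℝ} (hp0 : 0 ≤ p) (hp1 : p ≤ 1) (A : List Bool) : 0 ≤ strP p A := by
  refine List.prod_nonneg ?_
  intro x hx
  obtain ⟨b, _, rfl⟩ := List.mem_map.1 hx
  exact letterP_nonneg hp0 hp1 b

lemma strP_eq_prod (p : ℝ) (S : List Bool) :
    strP p S = ∏ r : Fin S.length, letterP p (S.get r) := by
  conv_lhs => rw [strP, ← List.ofFn_get S]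
  rw [List.map_ofFn, List.prod_ofFn]
  rfl

/-! ### Cylinder events and events determined by finitely many tosses -/

def cylEvent (t : ℕ) (a : Fin t → Bool) : Set (ℕ → Bool) := {ξ | ∀ r : Fin t, ξ r = a r}

def afterEvent (S : List Bool) (t : ℕ) : Set (ℕ → Bool) :=
  {ξ | ∀ r : Fin S.length, ξ (t + r) = S.get r}

lemma mem_afterEvent_iff {S : List Bool} {t : ℕ} {ξ : ℕ → Bool} :
    ξ ∈ afterEvent S t ↔ ∀ s (h : s < S.length), ξ (t + s) = S[s] := by
  constructor
  · intro h s hs; exact h ⟨s, hs⟩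
  · intro h r; exact h r r.isLt

lemma measurableSet_cylEvent (t : ℕ) (a : Fin t → Bool) : MeasurableSet (cylEvent t a) := by
  have : cylEvent t a = ⋂ r : Fin t, (fun ξ : ℕ → Bool => ξ r) ⁻¹' {a r} := by
    ext ξ; simp [cylEvent]
  rw [this]
  exact MeasurableSet.iInter fun r =>
    (measurable_pi_apply (r : ℕ)) (measurableSet_singleton (a r))

lemma measurableSet_afterEvent (S : List Bool) (t : ℕ) : MeasurableSet (afterEvent S t) := by
  have : afterEvent S t = ⋂ r : Fin S.length, (fun ξ : ℕ → Bool => ξ (t + r)) ⁻¹' {S.get r} := by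
    ext ξ; simp [afterEvent]
  rw [this]
  exact MeasurableSet.iInter fun r =>
    (measurable_pi_apply (t + (r : ℕ))) (measurableSet_singleton (S.get r))

/-- `E` is determined by the first `t` tosses. -/
def DetBy (E : Set (ℕ → Bool)) (t : ℕ) : Prop :=
  ∀ ξ η : ℕ → Bool, (∀ r, r < t → ξ r = η r) → ξ ∈ E → η ∈ E

def extendF (t : ℕ) (a : Fin t → Bool) : ℕ → Bool := fun r => if h : r < t then a ⟨r, h⟩ else false

lemma DetBy.exists_finset {E : Set (ℕ → Bool)} {t : ℕ} (hE : DetBy E t) :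
    ∃ F : Finset (Fin t → Bool), E = ⋃ a ∈ F, cylEvent t a := by
  classical
  refine ⟨Finset.univ.filter (fun a => extendF t a ∈ E), ?_⟩
  ext ξ
  simp only [Set.mem_iUnion, Finset.mem_filter, Finset.mem_univ, true_and, exists_prop]
  constructor
  · intro hx
    refine ⟨fun r => ξ r, ?_, fun r => rfl⟩
    refine hE ξ _ ?_ hx
    intro r hr
    simp [extendF, hr]
  · rintro ⟨a, ha, hc⟩
    refine hE (extendF t a) ξ ?_ ha
    intro r hr
    simp only [extendF, dif_pos hr]
    exact (hc ⟨r, hr⟩).symm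

lemma DetBy.measurableSet {E : Set (ℕ → Bool)} {t : ℕ} (hE : DetBy E t) : MeasurableSet E := by
  obtain ⟨F, rfl⟩ := hE.exists_finset
  exact F.measurableSet_biUnion (fun a _ => measurableSet_cylEvent t a)

lemma cylEvent_disjoint {t : ℕ} {a b : Fin t → Bool} (hab : a ≠ b) :
    Disjoint (cylEvent t a) (cylEvent t b) := by
  rw [Set.disjoint_left]
  intro ξ ha hb
  exact hab (funext fun r => (ha r).symm.trans (hb r))

/-! ### The key independence computation -/

def combF (t : ℕ) (a : Fin t → Bool) (S : List Bool) : Fin (t + S.length) → Bool :=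
  fun r => if h : (r : ℕ) < t then a ⟨r, h⟩ else S.get ⟨(r : ℕ) - t, by have := r.isLt; omega⟩

lemma cyl_inter_after (t : ℕ) (a : Fin t → Bool) (S : List Bool) :
    cylEvent t a ∩ afterEvent S t = cylEvent (t + S.length) (combF t a S) := by
  ext ξ
  simp only [cylEvent, afterEvent, Set.mem_inter_iff, Set.mem_setOf_eq, combF]
  constructor
  · rintro ⟨h1, h2⟩ r
    by_cases h : (r : ℕ) < t
    · rw [dif_pos h]; exact h1 ⟨r, h⟩
    · rw [dif_neg h]
      have hr := r.isLt
      calc ξ r = ξ (t + ((r : ℕ) - t)) := by congr 1; omega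
        _ = S.get ⟨(r : ℕ) - t, by omega⟩ := h2 ⟨(r : ℕ) - t, by omega⟩
  · intro h
    constructor
    · intro r
      have := h ⟨(r : ℕ), by omega⟩
      rwa [dif_pos r.isLt, Fin.eta] at this
    · intro r
      have h2 := h ⟨t + (r : ℕ), by have := r.isLt; omega⟩
      simp only [Fin.val_mk] at h2
      rw [dif_neg (by omega : ¬ t + (r : ℕ) < t)] at h2
      simpa using h2

lemma prod_combF {p : ℝ} (t : ℕ) (a : Fin t → Bool) (S : List Bool) :
    ∏ r : Fin (t + S.length), letterP p (combF t a S r) =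
      (∏ r : Fin t, letterP p (a r)) * strP p S := by
  rw [Fin.prod_univ_add, strP_eq_prod]
  congr 1
  · apply Finset.prod_congr rfl
    intro r _
    congr 1
    simp [combF, Fin.castAdd]
  · apply Finset.prod_congr rfl
    intro r _
    congr 1
    have : ¬ ((Fin.natAdd t r : Fin (t + S.length)) : ℕ) < t := by simp
    rw [combF, dif_neg this]
    congr 1
    ext
    simp

lemma measure_inter_after {p : ℝ} (hp0 : 0 < p) (hp1 : p < 1) {μ : Measure (ℕ → Bool)}
    (hμ : IsCoinMeasure p μ) {E : Set (ℕ → Bool)} {t : ℕ} (hE : DetBy E t) (S : List Bool) :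
    μ (E ∩ afterEvent S t) = μ E * ENNReal.ofReal (strP p S) := by
  classical
  obtain ⟨F, hEF⟩ := hE.exists_finset
  have hcyl : ∀ (N : ℕ) (b : Fin N → Bool),
      μ (cylEvent N b) = ENNReal.ofReal (∏ r, letterP p (b r)) := fun N b => hμ N b
  have hdis1 : (↑F : Set (Fin t → Bool)).PairwiseDisjoint (cylEvent t) := by
    intro x _ y _ hxy
    exact cylEvent_disjoint hxy
  have hEeq : μ E = ∑ a ∈ F, μ (cylEvent t a) := by
    rw [hEF]
    exact measure_biUnion_finset hdis1 (fun a _ => measurableSet_cylEvent t a)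
  have hinter : E ∩ afterEvent S t = ⋃ a ∈ F, (cylEvent t a ∩ afterEvent S t) := by
    rw [hEF, Set.iUnion₂_inter]
  have hdis2 : (↑F : Set (Fin t → Bool)).PairwiseDisjoint
      (fun a => cylEvent t a ∩ afterEvent S t) := by
    intro x _ y _ hxy
    exact (cylEvent_disjoint hxy).mono Set.inter_subset_left Set.inter_subset_left
  have hmeas2 : ∀ a ∈ F, MeasurableSet (cylEvent t a ∩ afterEvent S t) := fun a _ =>
    (measurableSet_cylEvent t a).inter (measurableSet_afterEvent S t)
  rw [hinter, measure_biUnion_finset hdis2 hmeas2, hEeq, Finset.sum_mul]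
  apply Finset.sum_congr rfl
  intro a _
  rw [cyl_inter_after, hcyl, hcyl, prod_combF,
    ENNReal.ofReal_mul (Finset.prod_nonneg fun r _ => letterP_nonneg hp0.le hp1.le _)]

/-! ### Hitting times -/

lemma occursAt_iff {A : List Bool} {ξ : ℕ → Bool} {N : ℕ} :
    occursAt A ξ N ↔ A.length ≤ N ∧ ∀ s (h : s < A.length), ξ (N - A.length + s) = A[s] := by
  unfold occursAt
  constructor
  · rintro ⟨h1, h2⟩
    refine ⟨h1, fun s hs => ?_⟩
    rw [List.getElem_of_eq h2.symm hs, List.getElem_ofFn]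
  · rintro ⟨h1, h2⟩
    refine ⟨h1, ?_⟩
    apply List.ext_getElem (by simp)
    intro s hs1 hs2
    simp only [List.getElem_ofFn]
    exact h2 s hs2

lemma hitTime_le {A : List Bool} {ξ : ℕ → Bool} {N : ℕ} (h : occursAt A ξ N) :
    hitTime A ξ ≤ (N : ℕ∞) := by
  apply iInf_le_of_le N
  simp [h]

lemma le_hitTime_iff {A : List Bool} {ξ : ℕ → Bool} {N : ℕ} :
    (N : ℕ∞) ≤ hitTime A ξ ↔ ∀ t, t < N → ¬ occursAt A ξ t := by
  constructor
  · intro h t ht hocc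
    have h2 : (N : ℕ∞) ≤ (t : ℕ∞) := le_trans h (hitTime_le hocc)
    have : N ≤ t := by exact_mod_cast h2
    omega
  · intro h
    refine le_iInf fun t => le_iInf fun hocc => ?_
    have : N ≤ t := by by_contra hc; exact h t (by omega) hocc
    exact_mod_cast this

lemma hitTime_eq_iff {A : List Bool} {ξ : ℕ → Bool} {N : ℕ} :
    hitTime A ξ = (N : ℕ∞) ↔ occursAt A ξ N ∧ ∀ t, t < N → ¬ occursAt A ξ t := by
  constructor
  · intro h
    have hle : ∀ t, t < N → ¬ occursAt A ξ t := le_hitTime_iff.1 h.ge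
    refine ⟨?_, hle⟩
    by_contra hN
    have h2 : ((N + 1 : ℕ) : ℕ∞) ≤ hitTime A ξ := by
      refine le_hitTime_iff.2 fun t ht => ?_
      rcases Nat.lt_succ_iff_lt_or_eq.1 ht with h' | h'
      · exact hle t h'
      · subst h'; exact hN
    rw [h] at h2
    have : N + 1 ≤ N := by exact_mod_cast h2
    omega
  · rintro ⟨hocc, hlt⟩
    exact le_antisymm (hitTime_le hocc) (le_hitTime_iff.2 hlt)

lemma gameTime_le {m : ℕ} {A : Fin m → List Bool} {ξ : ℕ → Bool} (j : Fin m) :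
    gameTime A ξ ≤ hitTime (A j) ξ := iInf_le _ j

lemma lt_gameTime_iff {m : ℕ} {A : Fin m → List Bool} {ξ : ℕ → Bool} {n : ℕ} :
    (n : ℕ∞) < gameTime A ξ ↔ ∀ j t, t ≤ n → ¬ occursAt (A j) ξ t := by
  constructor
  · intro h j t ht hocc
    have h2 := lt_of_lt_of_le (lt_of_lt_of_le h (gameTime_le j)) (hitTime_le hocc)
    have : n < t := by exact_mod_cast h2
    omega
  · intro h
    have h2 : ((n + 1 : ℕ) : ℕ∞) ≤ gameTime A ξ := by
      refine le_iInf fun j => le_hitTime_iff.2 fun t ht => h j t (by omega)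
    refine lt_of_lt_of_le ?_ h2
    exact_mod_cast Nat.lt_succ_self n

lemma gameHit_iff {m : ℕ} {A : Fin m → List Bool} {ξ : ℕ → Bool} {j : Fin m} {N : ℕ} :
    (gameTime A ξ = (N : ℕ∞) ∧ hitTime (A j) ξ = (N : ℕ∞)) ↔
      (occursAt (A j) ξ N ∧ ∀ j' t, t < N → ¬ occursAt (A j') ξ t) := by
  constructor
  · rintro ⟨hg, hh⟩
    refine ⟨(hitTime_eq_iff.1 hh).1, fun j' t ht => ?_⟩
    have h2 : (N : ℕ∞) ≤ hitTime (A j') ξ := hg ▸ gameTime_le j'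
    exact le_hitTime_iff.1 h2 t ht
  · rintro ⟨hocc, hmin⟩
    have hh : hitTime (A j) ξ = (N : ℕ∞) := hitTime_eq_iff.2 ⟨hocc, fun t ht => hmin j t ht⟩
    exact ⟨le_antisymm (hh ▸ gameTime_le j)
      (le_iInf fun j' => le_hitTime_iff.2 fun t ht => hmin j' t ht), hh⟩

lemma occursAt_congr {A : List Bool} {ξ η : ℕ → Bool} {N : ℕ}
    (h : ∀ r, r < N → ξ r = η r) (hocc : occursAt A ξ N) : occursAt A η N := by
  rw [occursAt_iff] at hocc ⊢
  obtain ⟨h1, h2⟩ := hocc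
  refine ⟨h1, fun s hs => ?_⟩
  rw [← h2 s hs]
  exact (h _ (by omega)).symm

lemma occ_occ_suffix {B B' : List Bool} {ξ : ℕ → Bool} {N : ℕ} (h : occursAt B ξ N)
    (h' : occursAt B' ξ N) (hl : B.length ≤ B'.length) : B <:+ B' := by
  rw [occursAt_iff] at h h'
  obtain ⟨h1, h2⟩ := h
  obtain ⟨h1', h2'⟩ := h'
  have hBB : B = B'.drop (B'.length - B.length) := by
    apply List.ext_getElem (by simp; omega)
    intro s hs1 hs2
    rw [List.getElem_drop]
    have e1 := h2 s hs1
    have e2 := h2' (B'.length - B.length + s) (by omega)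
    exact e1.symm.trans ((congrArg ξ (by omega)).trans e2)
  rw [hBB]
  exact List.drop_suffix _ _

/-! ### The events of the decomposition -/

def Gset {m : ℕ} (A : Fin m → List Bool) (n : ℕ) : Set (ℕ → Bool) :=
  {ξ | (n : ℕ∞) < gameTime A ξ}

def Dset {m : ℕ} (A : Fin m → List Bool) (j : Fin m) (N : ℕ) : Set (ℕ → Bool) :=
  {ξ | gameTime A ξ = (N : ℕ∞) ∧ hitTime (A j) ξ = (N : ℕ∞)}

def condP {m : ℕ} (A : Fin m → List Bool) (i j : Fin m) (k : ℕ) : Prop :=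
  k ≤ (A j).length ∧ (A i).take k = (A j).drop ((A j).length - k)

instance {m : ℕ} (A : Fin m → List Bool) (i j : Fin m) (k : ℕ) : Decidable (condP A i j k) := by
  unfold condP; infer_instance

def fSet {m : ℕ} (A : Fin m → List Bool) (i : Fin m) (n : ℕ) (jk : Fin m × ℕ) :
    Set (ℕ → Bool) :=
  if condP A i jk.1 jk.2 then
    Dset A jk.1 (n + jk.2) ∩ afterEvent ((A i).drop jk.2) (n + jk.2) else ∅

lemma detBy_Gset {m : ℕ} (A : Fin m → List Bool) (n : ℕ) : DetBy (Gset A n) n := by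
  intro ξ η hag hξ
  simp only [Gset, Set.mem_setOf_eq, lt_gameTime_iff] at hξ ⊢
  intro j t ht hocc
  exact hξ j t ht (occursAt_congr (fun r hr => (hag r (by omega)).symm) hocc)

lemma detBy_Dset {m : ℕ} (A : Fin m → List Bool) (j : Fin m) (N : ℕ) :
    DetBy (Dset A j N) N := by
  intro ξ η hag hξ
  simp only [Dset, Set.mem_setOf_eq] at hξ ⊢
  rw [gameHit_iff] at hξ ⊢
  obtain ⟨h1, h2⟩ := hξ
  exact ⟨occursAt_congr hag h1,
    fun j' t ht hocc => h2 j' t ht (occursAt_congr (fun r hr => (hag r (by omega)).symm) hocc)⟩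

lemma measurableSet_fSet {m : ℕ} (A : Fin m → List Bool) (i : Fin m) (n : ℕ)
    (jk : Fin m × ℕ) : MeasurableSet (fSet A i n jk) := by
  unfold fSet
  split
  · exact (detBy_Dset A jk.1 (n + jk.2)).measurableSet.inter (measurableSet_afterEvent _ _)
  · exact MeasurableSet.empty

lemma fSet_pairwiseDisjoint {m : ℕ} (A : Fin m → List Bool)
    (hsub : ∀ i j, i ≠ j → ¬ A i <:+: A j) (i : Fin m) (n : ℕ) (s : Set (Fin m × ℕ)) :
    s.PairwiseDisjoint (fSet A i n) := by
  intro x _ y _ hxy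
  refine Set.disjoint_left.2 fun ξ hx hy => ?_
  unfold fSet at hx hy
  split_ifs at hx hy with h1 h2
  · obtain ⟨⟨hg1, hh1⟩, _⟩ := hx
    obtain ⟨⟨hg2, hh2⟩, _⟩ := hy
    have hk : x.2 = y.2 := by
      have h3 : ((n + x.2 : ℕ) : ℕ∞) = ((n + y.2 : ℕ) : ℕ∞) := hg1.symm.trans hg2
      have : n + x.2 = n + y.2 := by exact_mod_cast h3
      omega
    have hj : x.1 ≠ y.1 := fun h => hxy (Prod.ext h hk)
    have o1 := (hitTime_eq_iff.1 hh1).1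
    have o2 := (hitTime_eq_iff.1 hh2).1
    rw [← hk] at o2
    rcases le_total (A x.1).length (A y.1).length with h | h
    · exact hsub x.1 y.1 hj (occ_occ_suffix o1 o2 h).isInfix
    · exact hsub y.1 x.1 hj.symm (occ_occ_suffix o2 o1 h).isInfix
  all_goals first | exact hx.elim | exact hy.elim

/-! ### The decomposition -/

lemma decomp {m : ℕ} (A : Fin m → List Bool)
    (hsub : ∀ i j, i ≠ j → ¬ A i <:+: A j) (i : Fin m) (n : ℕ) :
    Gset A n ∩ afterEvent (A i) n =
      ⋃ jk ∈ (Finset.univ ×ˢ Finset.Icc 1 (A i).length : Finset (Fin m × ℕ)),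
        fSet A i n jk := by
  classical
  ext ξ
  simp only [Set.mem_inter_iff, Set.mem_iUnion, Finset.mem_product, Finset.mem_univ,
    Finset.mem_Icc, true_and, exists_prop, Prod.exists]
  constructor
  · rintro ⟨hξG, hξa⟩
    have hG : (n : ℕ∞) < gameTime A ξ := hξG
    have hafter : ∀ s (h : s < (A i).length), ξ (n + s) = (A i)[s] := mem_afterEvent_iff.1 hξa
    have hocci : occursAt (A i) ξ (n + (A i).length) := by
      rw [occursAt_iff]
      refine ⟨by omega, fun s hs => ?_⟩
      rw [show n + (A i).length - (A i).length + s = n + s by omega]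
      exact hafter s hs
    have hgle : gameTime A ξ ≤ ((n + (A i).length : ℕ) : ℕ∞) :=
      le_trans (gameTime_le i) (hitTime_le hocci)
    obtain ⟨N, hN⟩ : ∃ N : ℕ, gameTime A ξ = (N : ℕ∞) := by
      have hne : gameTime A ξ ≠ ⊤ := by
        intro h
        rw [h] at hgle
        exact (ENat.coe_ne_top _) (top_le_iff.1 hgle)
      obtain ⟨N, hN⟩ := WithTop.ne_top_iff_exists.1 hne
      exact ⟨N, hN.symm⟩
    have hNn : n < N := by
      have h' := hG; rw [hN] at h'; exact_mod_cast h'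
    have hNl : N ≤ n + (A i).length := by
      have h' := hgle; rw [hN] at h'; exact_mod_cast h'
    obtain ⟨j, hj⟩ : ∃ j, hitTime (A j) ξ = (N : ℕ∞) := by
      by_contra hc
      push_neg at hc
      have hge : ((N + 1 : ℕ) : ℕ∞) ≤ gameTime A ξ := by
        refine le_iInf fun j => le_hitTime_iff.2 fun t ht hocc => ?_
        have h1 : (N : ℕ∞) ≤ hitTime (A j) ξ := hN ▸ gameTime_le j
        have h2 := hitTime_le hocc
        have h4 : N ≤ t := by exact_mod_cast le_trans h1 h2
        have : t = N := by omega
        subst this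
        exact hc j (le_antisymm h2 h1)
      rw [hN] at hge
      have : N + 1 ≤ N := by exact_mod_cast hge
      omega
    set k := N - n with hk
    have hNk : N = n + k := by omega
    have hoccj := (hitTime_eq_iff.1 hj).1
    rw [occursAt_iff] at hoccj
    obtain ⟨hljN, hocc2⟩ := hoccj
    have hkl : k ≤ (A i).length := by omega
    have hk1 : 1 ≤ k := by omega
    have hklj : k ≤ (A j).length := by
      by_contra hc
      push_neg at hc
      have hij : j ≠ i := by rintro rfl; omega
      refine hsub j i hij ?_
      have hji : A j = ((A i).drop (k - (A j).length)).take (A j).length := by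
        apply List.ext_getElem (by simp; omega)
        intro s hs1 hs2
        rw [List.getElem_take, List.getElem_drop]
        have e1 := hocc2 s hs1
        have e2 := hafter (k - (A j).length + s) (by omega)
        exact e1.symm.trans ((congrArg ξ (by omega)).trans e2)
      rw [hji]
      exact ((List.take_prefix _ _).isInfix).trans ((List.drop_suffix _ _).isInfix)
    have hmatch : (A i).take k = (A j).drop ((A j).length - k) := by
      apply List.ext_getElem (by simp [List.length_take, List.length_drop]; omega)
      intro s hs1 hs2
      rw [List.getElem_take, List.getElem_drop]
      have hs1' : s < k := by simp [List.length_take] at hs1; omega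
      have e1 := hafter s (by omega)
      have e2 := hocc2 ((A j).length - k + s) (by omega)
      exact e1.symm.trans ((congrArg ξ (by omega)).trans e2)
    refine ⟨j, k, ⟨hk1, hkl⟩, ?_⟩
    unfold fSet
    rw [if_pos (show condP A i j k from ⟨hklj, hmatch⟩)]
    refine ⟨⟨?_, ?_⟩, ?_⟩
    · rw [show n + k = N by omega]; exact hN
    · rw [show n + k = N by omega]; exact hj
    · rw [mem_afterEvent_iff]
      intro s hs
      have hs' : s < (A i).length - k := by simpa using hs
      rw [List.getElem_drop]
      have e1 := hafter (k + s) (by omega)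
      exact (congrArg ξ (by omega)).trans e1
  · rintro ⟨j, k, ⟨hk1, hkl⟩, hmem⟩
    unfold fSet at hmem
    dsimp only at hmem
    by_cases hc : condP A i j k
    swap
    · rw [if_neg hc] at hmem; exact absurd hmem (Set.notMem_empty ξ)
    rw [if_pos hc] at hmem
    obtain ⟨hklj, hmatch⟩ := hc
    obtain ⟨⟨hg, hh⟩, hafter'⟩ := hmem
    have hoccj := (hitTime_eq_iff.1 hh).1
    rw [occursAt_iff] at hoccj
    obtain ⟨hljN, hocc2⟩ := hoccj
    constructor
    · show (n : ℕ∞) < gameTime A ξ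
      rw [hg]
      exact_mod_cast (by omega : n < n + k)
    · rw [mem_afterEvent_iff]
      intro s hs
      by_cases hsk : s < k
      · have e2 := hocc2 ((A j).length - k + s) (by omega)
        have e3 : ((A i).take k)[s]'(by simp [List.length_take]; omega) =
            ((A j).drop ((A j).length - k))[s]'(by simp [List.length_drop]; omega) :=
          List.getElem_of_eq hmatch _
        rw [List.getElem_take, List.getElem_drop] at e3
        exact ((congrArg ξ (by omega)).trans e2).trans e3.symm
      · have e1 := mem_afterEvent_iff.1 hafter' (s - k) (by simp [List.length_drop]; omega)
        have e2 : ((A i).drop k)[s - k]'(by simp [List.length_drop]; omega) = (A i)[s]'hs := by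
          rw [List.getElem_drop]
          congr 1
          omega
        exact ((congrArg ξ (by omega)).trans e1).trans e2

end MultiRenewal
/-- In the `m`-player game, for every `1 ≤ i ≤ m` and every
`n ≥ 0`,
`q_n ⬝ P(A_i) = Σ_{j=1}^{m} Σ_{k=1}^{min(l_i,l_j)} [A_{i(k)} = A_j^{(k)}] ⬝ P(A_i^{(l_i−k)}) ⬝ p_{n+k}^{A_j}`,
where `q_n = μ(τ > n)` and `p_n^{A_j} = μ(τ = τ_{A_j} = n)`. -/
theorem multi_renewal_identity (p : ℝ) (hp0 : 0 < p) (hp1 : p < 1)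
    (μ : Measure (ℕ → Bool)) [IsProbabilityMeasure μ] (hμ : IsCoinMeasure p μ)
    (m : ℕ) (hm : 1 ≤ m) (A : Fin m → List Bool) (hlen : ∀ i, 1 ≤ (A i).length)
    (hsub : ∀ i j, i ≠ j → ¬ (A i) <:+: (A j))
    (i : Fin m) (n : ℕ) :
    (μ {ξ | (n : ℕ∞) < gameTime A ξ}).toReal * strP p (A i) =
      ∑ j, ∑ k ∈ Finset.Icc 1 (min (A i).length (A j).length),
        (if (A i).take k = (A j).drop ((A j).length - k) then (1 : ℝ) else 0) *
          strP p ((A i).drop k) *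
          (μ {ξ | gameTime A ξ = ((n + k : ℕ) : ℕ∞) ∧
              hitTime (A j) ξ = ((n + k : ℕ) : ℕ∞)}).toReal := by
  classical
  open MultiRenewal in
  have hnneg : ∀ S : List Bool, 0 ≤ strP p S := strP_nonneg hp0.le hp1.le
  have hmain : μ (Gset A n) * ENNReal.ofReal (strP p (A i)) =
      ∑ jk ∈ (Finset.univ ×ˢ Finset.Icc 1 (A i).length : Finset (Fin m × ℕ)),
        μ (fSet A i n jk) := by
    rw [← measure_inter_after hp0 hp1 hμ (detBy_Gset A n) (A i), decomp A hsub i n]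
    exact measure_biUnion_finset (fSet_pairwiseDisjoint A hsub i n _)
      (fun jk _ => measurableSet_fSet A i n jk)
  have hterm : ∀ (j : Fin m) (k : ℕ), μ (fSet A i n (j, k)) =
      if condP A i j k then
        μ (Dset A j (n + k)) * ENNReal.ofReal (strP p ((A i).drop k)) else 0 := by
    intro j k
    show μ (if condP A i j k then
        Dset A j (n + k) ∩ afterEvent ((A i).drop k) (n + k) else ∅) = _
    split_ifs with h
    · exact measure_inter_after hp0 hp1 hμ (detBy_Dset A j (n + k)) _
    · exact measure_empty
  have hfinal : (μ (Gset A n)).toReal * strP p (A i) =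
      ∑ j, ∑ k ∈ Finset.Icc 1 (min (A i).length (A j).length),
        (if (A i).take k = (A j).drop ((A j).length - k) then (1 : ℝ) else 0) *
          strP p ((A i).drop k) * (μ (Dset A j (n + k))).toReal := by
    calc (μ (Gset A n)).toReal * strP p (A i)
        = (μ (Gset A n) * ENNReal.ofReal (strP p (A i))).toReal := by
          rw [ENNReal.toReal_mul, ENNReal.toReal_ofReal (hnneg _)]
      _ = (∑ jk ∈ (Finset.univ ×ˢ Finset.Icc 1 (A i).length : Finset (Fin m × ℕ)),
            μ (fSet A i n jk)).toReal := by rw [hmain]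
      _ = ∑ jk ∈ (Finset.univ ×ˢ Finset.Icc 1 (A i).length : Finset (Fin m × ℕ)),
            (μ (fSet A i n jk)).toReal :=
          ENNReal.toReal_sum (fun _ _ => measure_ne_top μ _)
      _ = ∑ j : Fin m, ∑ k ∈ Finset.Icc 1 (A i).length, (μ (fSet A i n (j, k))).toReal :=
          Finset.sum_product _ _ _
      _ = ∑ j, ∑ k ∈ Finset.Icc 1 (min (A i).length (A j).length),
            (if (A i).take k = (A j).drop ((A j).length - k) then (1 : ℝ) else 0) *
              strP p ((A i).drop k) * (μ (Dset A j (n + k))).toReal := by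
          refine Finset.sum_congr rfl fun j _ => ?_
          rw [← Finset.sum_subset (Finset.Icc_subset_Icc_right (min_le_left _ _))
            (fun k hk1 hk2 => ?_)]
          · refine Finset.sum_congr rfl fun k hk => ?_
            simp only [Finset.mem_Icc] at hk
            rw [hterm]
            by_cases hmatch : (A i).take k = (A j).drop ((A j).length - k)
            · rw [if_pos (show condP A i j k from ⟨by omega, hmatch⟩), if_pos hmatch,
                ENNReal.toReal_mul, ENNReal.toReal_ofReal (hnneg _)]
              ring
            · rw [if_neg (fun hc => hmatch hc.2), if_neg hmatch]
              simp
          · simp only [Finset.mem_Icc] at hk1 hk2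
            rw [hterm, if_neg (fun hc : condP A i j k => by have := hc.1; omega)]
            simp
  exact hfinal
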